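/- p-box conjunction (Fréchet-style lower bound): for every valuation ε, pGCL program s, pDL formulae φ₁, φ₂, and expectation lower bounds p₁, p₂, if ε ⊨ [s]_{p₁} φ₁ and ε ⊨ [s]_{p₂} φ₂, then ε ⊨ [s]_p (φ₁ ∧ φ₂), where p is defined pointwise by p = max(p₁ + p₂ − 1, 0). -/
import Mathlib


namespace PGCL

/-- Program valuations: maps from program variables to real values. -/
abbrev PVal : Type := String → ℝ

/-- Logical environments: maps from logical variables to their values.
    Logical variables are disjoint from program variables and cannot be
    accessed by programs. -/
abbrev LEnv : Type := String → ℝ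

/-- Syntax of the probabilistic guarded command language pGCL.
    Expressions are embedded shallowly as functions of the valuation. -/
inductive Stmt : Type
  | skip : Stmt
  | assign (x : String) (e : PVal → ℝ) : Stmt
  | seq (s₁ s₂ : Stmt) : Stmt
  /-- demonic (non-deterministic) choice `s₁ ⊓ s₂` -/
  | dem (s₁ s₂ : Stmt) : Stmt
  /-- probabilistic choice `s₁ [e] s₂` -/
  | prob (e : PVal → ℝ) (s₁ s₂ : Stmt) : Stmt
  | ifte (e : PVal → Bool) (s₁ s₂ : Stmt) : Stmt
  | whileLoop (e : PVal → Bool) (s : Stmt) : Stmt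

/-- States of the MDP semantics: a valuation paired with the remaining program.
    `(ε, Stmt.skip)` is final. -/
abbrev PState : Type := PVal × Stmt

/-- A positional policy resolves each demonic choice (true = left branch). -/
abbrev Policy : Type := PState → Bool

/-- One-step transition relation of the MDP semantics of pGCL, under policy `π`:
    `Step π σ p σ'` means σ steps to σ' with probability `p`. -/
inductive Step (π : Policy) : PState → ℝ → PState → Prop
  | assign {ε : PVal} {x : String} {e : PVal → ℝ} :
      Step π (ε, Stmt.assign x e) 1 (Function.update ε x (e ε), Stmt.skip)
  | seqSkip {ε ε' : PVal} {s₁ s₂ : Stmt} {p : ℝ} :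
      Step π (ε, s₁) p (ε', s₂) → Step π (ε, Stmt.seq Stmt.skip s₁) p (ε', s₂)
  | seqStep {ε ε' : PVal} {s₁ s₂ s : Stmt} {p : ℝ} :
      Step π (ε, s₁) p (ε', s₂) → Step π (ε, Stmt.seq s₁ s) p (ε', Stmt.seq s₂ s)
  | probL {ε : PVal} {e : PVal → ℝ} {s₁ s₂ : Stmt} :
      0 ≤ e ε → e ε ≤ 1 → Step π (ε, Stmt.prob e s₁ s₂) (e ε) (ε, s₁)
  | probR {ε : PVal} {e : PVal → ℝ} {s₁ s₂ : Stmt} :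
      0 ≤ e ε → e ε ≤ 1 → Step π (ε, Stmt.prob e s₁ s₂) (1 - e ε) (ε, s₂)
  | demL {ε : PVal} {s₁ s₂ : Stmt} :
      π (ε, Stmt.dem s₁ s₂) = true → Step π (ε, Stmt.dem s₁ s₂) 1 (ε, s₁)
  | demR {ε : PVal} {s₁ s₂ : Stmt} :
      π (ε, Stmt.dem s₁ s₂) = false → Step π (ε, Stmt.dem s₁ s₂) 1 (ε, s₂)
  | iteT {ε : PVal} {e : PVal → Bool} {s₁ s₂ : Stmt} :
      e ε = true → Step π (ε, Stmt.ifte e s₁ s₂) 1 (ε, s₁)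
  | iteF {ε : PVal} {e : PVal → Bool} {s₁ s₂ : Stmt} :
      e ε = false → Step π (ε, Stmt.ifte e s₁ s₂) 1 (ε, s₂)
  | whileT {ε : PVal} {e : PVal → Bool} {s : Stmt} :
      e ε = true →
        Step π (ε, Stmt.whileLoop e s) 1 (ε, Stmt.seq s (Stmt.whileLoop e s))
  | whileF {ε : PVal} {e : PVal → Bool} {s : Stmt} :
      e ε = false → Step π (ε, Stmt.whileLoop e s) 1 (ε, Stmt.skip)

/-- Finite paths under a policy `π` from a state to a final state. -/
inductive MPath (π : Policy) : PState → Type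
  | nil (ε : PVal) : MPath π (ε, Stmt.skip)
  | cons {σ σ' : PState} (p : ℝ) (h : Step π σ p σ') (rest : MPath π σ') : MPath π σ

/-- The probability of a path: the product of its transition probabilities. -/
noncomputable def MPath.prob {π : Policy} : {σ : PState} → MPath π σ → ℝ
  | _, .nil _ => 1
  | _, .cons p _ rest => p * rest.prob

/-- The valuation in the final state of a path. -/
def MPath.finalVal {π : Policy} : {σ : PState} → MPath π σ → PVal
  | _, .nil ε => ε
  | _, .cons _ _ rest => rest.finalVal

/-- Expected reward `E_{σ,π} r`: the sum over all paths from σ under π of the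
    probability of the path times the reward of its final valuation. -/
noncomputable def expReward (π : Policy) (σ : PState) (r : PVal → ℝ) : ℝ :=
  ∑' ρ : MPath π σ, ρ.prob * r ρ.finalVal

/-- Expectation `𝔼_σ r`: infimum over all policies of the expected reward. -/
noncomputable def expectation (σ : PState) (r : PVal → ℝ) : ℝ :=
  ⨅ π : Policy, expReward π σ r

open Classical in
/-- Characteristic (indicator) function of a proposition. -/
noncomputable def ind (P : Prop) : ℝ := if P then 1 else 0

/-- Formulae of probabilistic dynamic logic pDL. Atomic formulae are embedded
    shallowly as predicates over the program valuation and logical environment. -/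
inductive Formula : Type
  | atom (A : PVal → LEnv → Prop) : Formula
  | neg (φ : Formula) : Formula
  | conj (φ₁ φ₂ : Formula) : Formula
  /-- universal quantification over the logical variable `l` (domain ℝ) -/
  | all (l : String) (φ : Formula) : Formula
  /-- the p-box modality `[s]_p φ` -/
  | box (s : Stmt) (p : PVal → ℝ) (φ : Formula) : Formula

/-- Satisfaction `ε, η ⊨ φ` of pDL formulae. -/
def Sat : Formula → PVal → LEnv → Prop
  | .atom A, ε, η => A ε η
  | .neg φ, ε, η => ¬ Sat φ ε η
  | .conj φ₁ φ₂, ε, η => Sat φ₁ ε η ∧ Sat φ₂ ε η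
  | .all l φ, ε, η => ∀ v : ℝ, Sat φ ε (Function.update η l v)
  | .box s p φ, ε, η => p ε ≤ expectation (ε, s) (fun ε' => ind (Sat φ ε' η))

/-- Disjunction `φ₁ ∨ φ₂ := ¬(¬φ₁ ∧ ¬φ₂)`. -/
def Formula.disj (φ₁ φ₂ : Formula) : Formula := .neg (.conj (.neg φ₁) (.neg φ₂))

/-- Existential quantification `∃l·φ := ¬∀l·¬φ`. -/
def Formula.ex (l : String) (φ : Formula) : Formula := .neg (.all l (.neg φ))

/-- A program is purely probabilistic if it contains no demonic choice. -/
def DemFree : Stmt → Prop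
  | .skip => True
  | .assign _ _ => True
  | .seq s₁ s₂ => DemFree s₁ ∧ DemFree s₂
  | .dem _ _ => False
  | .prob _ s₁ s₂ => DemFree s₁ ∧ DemFree s₂
  | .ifte _ s₁ s₂ => DemFree s₁ ∧ DemFree s₂
  | .whileLoop _ s => DemFree s

theorem Step.prob_nonneg' {π : Policy} {σ σ' : PState} {p : ℝ} (h : Step π σ p σ') : 0 ≤ p := by
  induction h with
  | assign => norm_num
  | seqSkip _ ih => exact ih
  | seqStep _ ih => exact ih
  | probL h0 h1 => exact h0
  | probR h0 h1 => linarith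
  | demL _ => norm_num
  | demR _ => norm_num
  | iteT _ => norm_num
  | iteF _ => norm_num
  | whileT _ => norm_num
  | whileF _ => norm_num

theorem MPath.prob_nonneg {π : Policy} {σ : PState} (ρ : MPath π σ) : 0 ≤ ρ.prob := by
  induction ρ with
  | nil ε => simp [MPath.prob]
  | cons p h rest ih => exact mul_nonneg h.prob_nonneg' ih

theorem no_step_skip {π : Policy} {ε : PVal} {p : ℝ} {σ' : PState}
    (h : Step π (ε, Stmt.skip) p σ') : False := by cases h

theorem skip_path_eq {π : Policy} {ε : PVal} (ρ : MPath π (ε, Stmt.skip)) :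
    ρ = MPath.nil ε := by
  cases ρ with
  | nil => rfl
  | cons p h rest => exact (no_step_skip h).elim

theorem branch (π : Policy) (ε : PVal) (s : Stmt) :
    ∃ (q : ℝ) (σ₁ σ₂ : PState), 0 ≤ q ∧ q ≤ 1 ∧
      ∀ p σ', Step π (ε, s) p σ' → (p = q ∧ σ' = σ₁) ∨ (p = 1 - q ∧ σ' = σ₂) := by
  induction s with
  | skip =>
      exact ⟨1, (ε, .skip), (ε, .skip), by norm_num, le_refl _,
        fun p σ' h => (no_step_skip h).elim⟩
  | assign x e =>
      refine ⟨1, (Function.update ε x (e ε), .skip), (Function.update ε x (e ε), .skip),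
        by norm_num, le_refl _, fun p σ' h => ?_⟩
      cases h; exact Or.inl ⟨rfl, rfl⟩
  | seq a b iha ihb =>
      by_cases ha : a = Stmt.skip
      · subst ha
        obtain ⟨q, σ₁, σ₂, h0, h1, hc⟩ := ihb
        refine ⟨q, σ₁, σ₂, h0, h1, fun p σ' h => ?_⟩
        cases h with
        | seqSkip h' => exact hc _ _ h'
        | seqStep h' => exact (no_step_skip h').elim
      · obtain ⟨q, σ₁, σ₂, h0, h1, hc⟩ := iha
        refine ⟨q, (σ₁.1, .seq σ₁.2 b), (σ₂.1, .seq σ₂.2 b), h0, h1, fun p σ' h => ?_⟩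
        cases h with
        | seqSkip h' => exact (ha rfl).elim
        | seqStep h' =>
            rcases hc _ _ h' with ⟨hp, hσ⟩ | ⟨hp, hσ⟩
            · exact Or.inl ⟨hp, by rw [← hσ]⟩
            · exact Or.inr ⟨hp, by rw [← hσ]⟩
  | dem a b iha ihb =>
      cases hπ : π (ε, Stmt.dem a b) with
      | true =>
          refine ⟨1, (ε, a), (ε, a), by norm_num, le_refl _, fun p σ' h => ?_⟩
          cases h with
          | demL _ => exact Or.inl ⟨rfl, rfl⟩
          | demR h' => rw [hπ] at h'; exact absurd h' (by simp)
      | false =>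
          refine ⟨1, (ε, b), (ε, b), by norm_num, le_refl _, fun p σ' h => ?_⟩
          cases h with
          | demR _ => exact Or.inl ⟨rfl, rfl⟩
          | demL h' => rw [hπ] at h'; exact absurd h' (by simp)
  | prob e a b iha ihb =>
      by_cases he : 0 ≤ e ε ∧ e ε ≤ 1
      · refine ⟨e ε, (ε, a), (ε, b), he.1, he.2, fun p σ' h => ?_⟩
        cases h with
        | probL _ _ => exact Or.inl ⟨rfl, rfl⟩
        | probR _ _ => exact Or.inr ⟨rfl, rfl⟩
      · refine ⟨1, (ε, a), (ε, b), by norm_num, le_refl _, fun p σ' h => ?_⟩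
        cases h with
        | probL h0 h1 => exact absurd ⟨h0, h1⟩ he
        | probR h0 h1 => exact absurd ⟨h0, h1⟩ he
  | ifte e a b iha ihb =>
      cases he : e ε with
      | true =>
          refine ⟨1, (ε, a), (ε, a), by norm_num, le_refl _, fun p σ' h => ?_⟩
          cases h with
          | iteT _ => exact Or.inl ⟨rfl, rfl⟩
          | iteF h' => rw [he] at h'; exact absurd h' (by simp)
      | false =>
          refine ⟨1, (ε, b), (ε, b), by norm_num, le_refl _, fun p σ' h => ?_⟩
          cases h with
          | iteF _ => exact Or.inl ⟨rfl, rfl⟩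
          | iteT h' => rw [he] at h'; exact absurd h' (by simp)
  | whileLoop e a iha =>
      cases he : e ε with
      | true =>
          refine ⟨1, (ε, .seq a (.whileLoop e a)), (ε, .seq a (.whileLoop e a)),
            by norm_num, le_refl _, fun p σ' h => ?_⟩
          cases h with
          | whileT _ => exact Or.inl ⟨rfl, rfl⟩
          | whileF h' => rw [he] at h'; exact absurd h' (by simp)
      | false =>
          refine ⟨1, (ε, .skip), (ε, .skip), by norm_num, le_refl _, fun p σ' h => ?_⟩
          cases h with
          | whileF _ => exact Or.inl ⟨rfl, rfl⟩
          | whileT h' => rw [he] at h'; exact absurd h' (by simp)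

def MPath.len {π : Policy} : {σ : PState} → MPath π σ → ℕ
  | _, .nil _ => 0
  | _, .cons _ _ rest => rest.len + 1

open Classical in
theorem sum_prob_le_one (π : Policy) : ∀ (n : ℕ) (σ : PState) (F : Finset (MPath π σ)),
    (∑ ρ ∈ F, ρ.len) ≤ n → ∑ ρ ∈ F, ρ.prob ≤ 1 := by
  intro n
  induction n using Nat.strong_induction_on with
  | _ n ih =>
    rintro ⟨ε, s⟩ F hlen
    by_cases hs : s = Stmt.skip
    · subst hs
      have hsub : F ⊆ {MPath.nil ε} := by
        intro ρ _; simp [skip_path_eq ρ]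
      calc ∑ ρ ∈ F, ρ.prob ≤ ∑ ρ ∈ ({MPath.nil ε} : Finset (MPath π (ε, Stmt.skip))), ρ.prob :=
            Finset.sum_le_sum_of_subset_of_nonneg hsub (fun i _ _ => i.prob_nonneg)
        _ = 1 := by simp [MPath.prob]
    · obtain ⟨q, σ₁, σ₂, hq0, hq1, hc⟩ := branch π ε s
      -- a generic bound for one branch
      have key : ∀ (r : ℝ) (τ : PState), 0 ≤ r →
          ∀ (G : Finset (MPath π (ε, s))),
          (∀ ρ ∈ G, ∃ (h : Step π (ε, s) r τ) (rest : MPath π τ), ρ = MPath.cons r h rest) →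
          (∑ ρ ∈ G, ρ.len) ≤ n →
          ∑ ρ ∈ G, ρ.prob ≤ r := by
        intro r τ hr G hG hGlen
        rcases G.eq_empty_or_nonempty with rfl | ⟨ρ₀, hρ₀⟩
        · simpa using hr
        obtain ⟨h₀, rest₀, -⟩ := hG ρ₀ hρ₀
        set t : MPath π (ε, s) → MPath π τ :=
          fun ρ => if h : ∃ rest : MPath π τ, ρ = MPath.cons r h₀ rest then h.choose else rest₀
          with ht
        have hts : ∀ ρ ∈ G, ρ = MPath.cons r h₀ (t ρ) := by
          intro ρ hρ
          obtain ⟨h, rest, hrest⟩ := hG ρ hρ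
          have hex : ∃ rest : MPath π τ, ρ = MPath.cons r h₀ rest := ⟨rest, hrest⟩
          simp only [ht, dif_pos hex]
          exact hex.choose_spec
        have htinj : ∀ ρ ∈ G, ∀ ρ' ∈ G, t ρ = t ρ' → ρ = ρ' := by
          intro ρ hρ ρ' hρ' h
          rw [hts ρ hρ, hts ρ' hρ', h]
        have hlenG : (∑ ρ ∈ G, ρ.len) = (∑ ρ ∈ G, (t ρ).len) + G.card := by
          have h1 : (∑ ρ ∈ G, ρ.len) = ∑ ρ ∈ G, ((t ρ).len + 1) := by
            refine Finset.sum_congr rfl fun ρ hρ => ?_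
            conv_lhs => rw [hts ρ hρ]
            rfl
          rw [h1, Finset.sum_add_distrib, Finset.sum_const, smul_eq_mul, mul_one]
        have hcard : 1 ≤ G.card := Finset.card_pos.mpr ⟨ρ₀, hρ₀⟩
        have hn1 : 1 ≤ n := le_trans (le_trans hcard (by omega)) hGlen
        have himlen : (∑ ρ' ∈ G.image t, MPath.len ρ') ≤ n - 1 := by
          rw [Finset.sum_image htinj]
          omega
        have him : ∑ ρ' ∈ G.image t, MPath.prob ρ' ≤ 1 :=
          ih (n - 1) (by omega) τ (G.image t) himlen
        calc ∑ ρ ∈ G, ρ.prob = ∑ ρ ∈ G, r * (t ρ).prob := by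
              refine Finset.sum_congr rfl fun ρ hρ => ?_
              conv_lhs => rw [hts ρ hρ]
              simp [MPath.prob]
          _ = r * ∑ ρ' ∈ G.image t, MPath.prob ρ' := by
              rw [Finset.sum_image htinj, Finset.mul_sum]
          _ ≤ r * 1 := by
              refine mul_le_mul_of_nonneg_left him hr
          _ = r := mul_one r
      -- split F by the first transition
      set P : MPath π (ε, s) → Prop :=
        fun ρ => ∃ (h : Step π (ε, s) q σ₁) (rest : MPath π σ₁), ρ = MPath.cons q h rest with hP
      have hPQ : ∀ ρ ∈ F, ¬ P ρ →
          ∃ (h : Step π (ε, s) (1 - q) σ₂) (rest : MPath π σ₂), ρ = MPath.cons (1 - q) h rest := by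
        intro ρ _ hnp
        cases ρ with
        | nil => exact (hs rfl).elim
        | cons p h rest =>
            rcases hc _ _ h with ⟨hp, hσ⟩ | ⟨hp, hσ⟩
            · subst hp; subst hσ; exact (hnp ⟨h, rest, rfl⟩).elim
            · subst hp; subst hσ; exact ⟨h, rest, rfl⟩
      have hsplit : ∑ ρ ∈ F, ρ.prob =
          (∑ ρ ∈ F.filter P, ρ.prob) + ∑ ρ ∈ F.filter (fun ρ => ¬ P ρ), ρ.prob :=
        (Finset.sum_filter_add_sum_filter_not F P _).symm
      have h₁ : ∑ ρ ∈ F.filter P, ρ.prob ≤ q := by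
        refine key q σ₁ hq0 _ (fun ρ hρ => (Finset.mem_filter.mp hρ).2) ?_
        exact le_trans (Finset.sum_le_sum_of_subset (Finset.filter_subset _ _)) hlen
      have h₂ : ∑ ρ ∈ F.filter (fun ρ => ¬ P ρ), ρ.prob ≤ 1 - q := by
        refine key (1 - q) σ₂ (by linarith) _
          (fun ρ hρ => hPQ ρ (Finset.mem_filter.mp hρ).1 (Finset.mem_filter.mp hρ).2) ?_
        exact le_trans (Finset.sum_le_sum_of_subset (Finset.filter_subset _ _)) hlen
      rw [hsplit]; linarith

theorem summable_prob (π : Policy) (σ : PState) :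
    Summable (fun ρ : MPath π σ => ρ.prob) :=
  summable_of_sum_le (fun ρ => ρ.prob_nonneg)
    (fun F => sum_prob_le_one π (∑ ρ ∈ F, ρ.len) σ F le_rfl)

theorem tsum_prob_le_one (π : Policy) (σ : PState) :
    (∑' ρ : MPath π σ, ρ.prob) ≤ 1 :=
  Summable.tsum_le_of_sum_le (summable_prob π σ)
    (fun F => sum_prob_le_one π (∑ ρ ∈ F, ρ.len) σ F le_rfl)

theorem ind_nonneg (P : Prop) : 0 ≤ ind P := by
  unfold ind; split <;> norm_num

theorem ind_le_one (P : Prop) : ind P ≤ 1 := by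
  unfold ind; split <;> norm_num

theorem ind_frechet (A B : Prop) : ind A + ind B ≤ ind (A ∧ B) + 1 := by
  unfold ind; split_ifs <;> simp_all

theorem expReward_nonneg (π : Policy) (σ : PState) {r : PVal → ℝ}
    (hr : ∀ ε', 0 ≤ r ε') : 0 ≤ expReward π σ r :=
  tsum_nonneg fun ρ => mul_nonneg ρ.prob_nonneg (hr _)

theorem expectation_nonneg (σ : PState) {r : PVal → ℝ}
    (hr : ∀ ε', 0 ≤ r ε') : 0 ≤ expectation σ r :=
  le_ciInf fun π => expReward_nonneg π σ hr

theorem bddBelow_expReward (σ : PState) {r : PVal → ℝ} (hr : ∀ ε', 0 ≤ r ε') :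
    BddBelow (Set.range fun π : Policy => expReward π σ r) := by
  refine ⟨0, ?_⟩
  rintro x ⟨π, rfl⟩
  exact expReward_nonneg π σ hr

theorem frechet_expReward (π : Policy) (σ : PState) (A B : PVal → Prop) :
    expReward π σ (fun ε' => ind (A ε')) + expReward π σ (fun ε' => ind (B ε'))
      ≤ expReward π σ (fun ε' => ind (A ε' ∧ B ε')) + 1 := by
  set f : MPath π σ → ℝ := fun ρ => ρ.prob * ind (A ρ.finalVal) with hf
  set g : MPath π σ → ℝ := fun ρ => ρ.prob * ind (B ρ.finalVal) with hg
  set h : MPath π σ → ℝ := fun ρ => ρ.prob * ind (A ρ.finalVal ∧ B ρ.finalVal) with hh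
  set t : MPath π σ → ℝ := fun ρ => ρ.prob with htd
  have St : Summable t := summable_prob π σ
  have hft : ∀ ρ, f ρ ≤ t ρ := fun ρ => by
    simpa using mul_le_mul_of_nonneg_left (ind_le_one _) ρ.prob_nonneg
  have hgt : ∀ ρ, g ρ ≤ t ρ := fun ρ => by
    simpa using mul_le_mul_of_nonneg_left (ind_le_one _) ρ.prob_nonneg
  have hht : ∀ ρ, h ρ ≤ t ρ := fun ρ => by
    simpa using mul_le_mul_of_nonneg_left (ind_le_one _) ρ.prob_nonneg
  have Sf : Summable f :=
    St.of_nonneg_of_le (fun ρ => mul_nonneg ρ.prob_nonneg (ind_nonneg _)) hft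
  have Sg : Summable g :=
    St.of_nonneg_of_le (fun ρ => mul_nonneg ρ.prob_nonneg (ind_nonneg _)) hgt
  have Sh : Summable h :=
    St.of_nonneg_of_le (fun ρ => mul_nonneg ρ.prob_nonneg (ind_nonneg _)) hht
  have hpt : ∀ ρ, f ρ + g ρ ≤ h ρ + t ρ := by
    intro ρ
    have := mul_le_mul_of_nonneg_left (ind_frechet (A ρ.finalVal) (B ρ.finalVal)) ρ.prob_nonneg
    simp only [hf, hg, hh, htd, mul_add, mul_one] at this ⊢
    linarith
  have key : (∑' ρ, f ρ) + (∑' ρ, g ρ) ≤ (∑' ρ, h ρ) + (∑' ρ, t ρ) := by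
    rw [← Summable.tsum_add Sf Sg, ← Summable.tsum_add Sh St]
    exact Summable.tsum_le_tsum hpt (Sf.add Sg) (Sh.add St)
  have ht1 : (∑' ρ, t ρ) ≤ 1 := tsum_prob_le_one π σ
  simp only [expReward]
  calc (∑' ρ : MPath π σ, ρ.prob * ind (A ρ.finalVal))
        + (∑' ρ : MPath π σ, ρ.prob * ind (B ρ.finalVal))
      = (∑' ρ, f ρ) + (∑' ρ, g ρ) := rfl
    _ ≤ (∑' ρ, h ρ) + (∑' ρ, t ρ) := key
    _ ≤ (∑' ρ, h ρ) + 1 := by linarith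
    _ = (∑' ρ : MPath π σ, ρ.prob * ind (A ρ.finalVal ∧ B ρ.finalVal)) + 1 := rfl

end PGCL

open PGCL

/-- p-box conjunction (Fréchet-style lower bound). -/
theorem pbox_conjunction (ε : PVal) (η : LEnv) (s : Stmt) (φ₁ φ₂ : Formula)
    (p₁ p₂ : PVal → ℝ)
    (hp₁ : ∀ ε', p₁ ε' ∈ Set.Icc (0 : ℝ) 1) (hp₂ : ∀ ε', p₂ ε' ∈ Set.Icc (0 : ℝ) 1)
    (h₁ : Sat (.box s p₁ φ₁) ε η) (h₂ : Sat (.box s p₂ φ₂) ε η) :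
    Sat (.box s (fun ε' => max (p₁ ε' + p₂ ε' - 1) 0) (.conj φ₁ φ₂)) ε η := by
  simp only [Sat] at h₁ h₂ ⊢
  have hmain : ∀ π : Policy, p₁ ε + p₂ ε - 1 ≤
      expReward π (ε, s) (fun ε' => ind (Sat φ₁ ε' η ∧ Sat φ₂ ε' η)) := by
    intro π
    have hA : p₁ ε ≤ expReward π (ε, s) (fun ε' => ind (Sat φ₁ ε' η)) :=
      h₁.trans (ciInf_le (bddBelow_expReward _ fun ε' => ind_nonneg _) π)
    have hB : p₂ ε ≤ expReward π (ε, s) (fun ε' => ind (Sat φ₂ ε' η)) :=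
      h₂.trans (ciInf_le (bddBelow_expReward _ fun ε' => ind_nonneg _) π)
    have hF := frechet_expReward π (ε, s) (fun ε' => Sat φ₁ ε' η) (fun ε' => Sat φ₂ ε' η)
    linarith
  exact max_le (le_ciInf hmain) (expectation_nonneg _ fun ε' => ind_nonneg _)
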